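/- The polynomial f₆ = Σ_i x_i⁶ − (15/(n−1)) Σ_{i≠j} x_i² x_j⁴ + (180/((n−1)(n−2))) Σ_{i<j<k} x_i² x_j² x_k² is harmonic in n variables for every n ≥ 3. -/

import Mathlib

open MvPolynomial

/-- The polynomial
`f₆ = ∑_i x_i⁶ − (15/(n−1)) ∑_{i≠j} x_i² x_j⁴ + (180/((n−1)(n−2))) ∑_{i<j<k} x_i² x_j² x_k²`. -/
noncomputable def f6 (n : ℕ) : MvPolynomial (Fin n) ℝ :=
  (∑ i, X i ^ 6) -
    C (15 / ((n : ℝ) - 1)) *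
      ∑ p ∈ Finset.univ.offDiag, X p.1 ^ 2 * X p.2 ^ 4 +
    C (180 / (((n : ℝ) - 1) * ((n : ℝ) - 2))) *
      ∑ t ∈ Finset.univ.filter
          (fun t : Fin n × Fin n × Fin n => t.1 < t.2.1 ∧ t.2.1 < t.2.2),
        X t.1 ^ 2 * X t.2.1 ^ 2 * X t.2.2 ^ 2

namespace F6Aux

variable {n : ℕ}

lemma pd_ofNat (i : Fin n) (k : ℕ) [k.AtLeastTwo] :
    pderiv i (OfNat.ofNat k : MvPolynomial (Fin n) ℝ) = 0 := by
  rw [← map_ofNat (C : ℝ →+* MvPolynomial (Fin n) ℝ) k, pderiv_C]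

lemma pdNat (i : Fin n) (m : ℕ) : pderiv i ((m : ℕ) : MvPolynomial (Fin n) ℝ) = 0 :=
  Derivation.map_natCast _ m

lemma pd2 (i : Fin n) : pderiv i (2 : MvPolynomial (Fin n) ℝ) = 0 := pd_ofNat i 2
lemma pd4 (i : Fin n) : pderiv i (4 : MvPolynomial (Fin n) ℝ) = 0 := pd_ofNat i 4
lemma pd3 (i : Fin n) : pderiv i (3 : MvPolynomial (Fin n) ℝ) = 0 := pd_ofNat i 3
lemma pd5 (i : Fin n) : pderiv i (5 : MvPolynomial (Fin n) ℝ) = 0 := pd_ofNat i 5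
lemma pd6 (i : Fin n) : pderiv i (6 : MvPolynomial (Fin n) ℝ) = 0 := pd_ofNat i 6

lemma lap_X6 (i j : Fin n) :
    pderiv i (pderiv i (X j ^ 6 : MvPolynomial (Fin n) ℝ)) =
      if i = j then (30 : ℕ) • X j ^ 4 else 0 := by
  rcases eq_or_ne i j with rfl | h
  · simp only [if_pos rfl]
    simp [pderiv_pow, pderiv_X_self, pderiv_mul, pd2, pd3, pd4, pd5, pd6, pdNat, pderiv_C]
    ring
  · simp [pderiv_pow, pderiv_X_of_ne (Ne.symm h), h]

lemma lap_pair (p q : Fin n) (hpq : p ≠ q) (i : Fin n) :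
    pderiv i (pderiv i (X p ^ 2 * X q ^ 4 : MvPolynomial (Fin n) ℝ)) =
      (if i = p then (2 : ℕ) • X q ^ 4 else 0) +
        (if i = q then (12 : ℕ) • (X p ^ 2 * X q ^ 2) else 0) := by
  rcases eq_or_ne i p with rfl | hp
  · simp [pderiv_mul, pderiv_pow, pderiv_X_self, pderiv_X_of_ne (hpq.symm), hpq.symm, hpq,
      pd2, pd3, pd4, pd5, pd6, pdNat, pderiv_C]
    ring
  · rcases eq_or_ne i q with rfl | hq
    · simp [pderiv_mul, pderiv_pow, pderiv_X_self, pderiv_X_of_ne hp, hp, pd2, pd3, pd4, pd5, pd6, pdNat, pderiv_C,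
        (Ne.symm hp)]
      ring
    · simp [pderiv_mul, pderiv_pow, pderiv_X_of_ne hp, pderiv_X_of_ne hq, hp, hq]

lemma lap_triple (a b c : Fin n) (hab : a ≠ b) (hac : a ≠ c) (hbc : b ≠ c) (i : Fin n) :
    pderiv i (pderiv i (X a ^ 2 * X b ^ 2 * X c ^ 2 : MvPolynomial (Fin n) ℝ)) =
      (if i = a then (2 : ℕ) • (X b ^ 2 * X c ^ 2) else 0) +
        (if i = b then (2 : ℕ) • (X a ^ 2 * X c ^ 2) else 0) +
        (if i = c then (2 : ℕ) • (X a ^ 2 * X b ^ 2) else 0) := by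
  rcases eq_or_ne i a with rfl | ha
  · simp [pderiv_mul, pderiv_pow, pderiv_X_self, pderiv_X_of_ne hab.symm,
      pderiv_X_of_ne hac.symm, hab.symm, hac.symm, hab, hac, pd2, pd3, pd4, pd5, pd6, pdNat, pderiv_C]
    ring
  · rcases eq_or_ne i b with rfl | hb
    · simp [pderiv_mul, pderiv_pow, pderiv_X_self, pderiv_X_of_ne ha,
        pderiv_X_of_ne hbc.symm, Ne.symm ha, hbc.symm, ha, hbc, pd2, pd3, pd4, pd5, pd6, pdNat, pderiv_C]
      ring
    · rcases eq_or_ne i c with rfl | hc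
      · simp [pderiv_mul, pderiv_pow, pderiv_X_self, pderiv_X_of_ne ha,
          pderiv_X_of_ne hb, Ne.symm ha, Ne.symm hb, ha, hb, pd2, pd3, pd4, pd5, pd6, pdNat, pderiv_C]
        ring
      · simp [pderiv_mul, pderiv_pow, pderiv_X_of_ne ha, pderiv_X_of_ne hb,
          pderiv_X_of_ne hc, ha, hb, hc]

lemma sum_ite_card {M : Type*} [AddCommMonoid M] (p : Fin n → Prop) [DecidablePred p] (c : M) :
    ∑ i, (if p i then c else 0) = (Finset.univ.filter p).card • c := by
  rw [← Finset.sum_filter, Finset.sum_const]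

lemma sum3_comm {M : Type*} [AddCommMonoid M] (f : Fin n → Fin n → Fin n → M) :
    ∑ i, ∑ j, ∑ k, f i j k = ∑ j, ∑ k, ∑ i, f i j k := by
  rw [Finset.sum_comm]
  exact Finset.sum_congr rfl fun j _ => Finset.sum_comm

end F6Aux

open F6Aux in
/-- `f₆` is harmonic for every `n ≥ 3`. -/
theorem stmt5 (n : ℕ) (hn : 3 ≤ n) :
    ∑ i, pderiv i (pderiv i (f6 n)) = 0 := by
  classical
  -- notation
  set S4 : MvPolynomial (Fin n) ℝ := ∑ j, X j ^ 4 with hS4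
  set G : MvPolynomial (Fin n) ℝ :=
    ∑ p : Fin n, ∑ q : Fin n, if p < q then X p ^ 2 * X q ^ 2 else 0 with hG
  -- Laplacian of the first sum
  have L1 : ∑ i, pderiv i (pderiv i ((∑ j, X j ^ 6 : MvPolynomial (Fin n) ℝ))) =
      (30 : ℕ) • S4 := by
    simp only [map_sum]
    rw [Finset.sum_comm]
    simp only [lap_X6, Fintype.sum_ite_eq']
    rw [hS4, Finset.smul_sum]
  -- Laplacian of the pair sum
  have L2 : ∑ i, pderiv i (pderiv i
        ((∑ p ∈ Finset.univ.offDiag, X p.1 ^ 2 * X p.2 ^ 4 : MvPolynomial (Fin n) ℝ))) =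
      (2 : ℕ) • ((n - 1 : ℕ) • S4) + (12 : ℕ) • ((2 : ℕ) • G) := by
    simp only [map_sum]
    rw [Finset.sum_comm]
    have step : ∀ p ∈ (Finset.univ : Finset (Fin n)).offDiag,
        ∑ i, pderiv i (pderiv i (X p.1 ^ 2 * X p.2 ^ 4 : MvPolynomial (Fin n) ℝ)) =
          (2 : ℕ) • (X p.2 ^ 4 : MvPolynomial (Fin n) ℝ) +
            (12 : ℕ) • (X p.1 ^ 2 * X p.2 ^ 2 : MvPolynomial (Fin n) ℝ) := by
      intro p hp
      rw [Finset.mem_offDiag] at hp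
      simp only [lap_pair p.1 p.2 hp.2.2, Finset.sum_add_distrib, Fintype.sum_ite_eq']
    rw [Finset.sum_congr rfl step, Finset.sum_add_distrib, ← Finset.smul_sum, ← Finset.smul_sum]
    congr 1
    · -- ∑ over offDiag of X p.2 ^ 4 = (n-1) • S4
      congr 1
      have : (Finset.univ : Finset (Fin n)).offDiag =
          (Finset.univ ×ˢ Finset.univ).filter fun p : Fin n × Fin n => p.1 ≠ p.2 := by ext; simp
      rw [this, Finset.sum_filter, Finset.univ_product_univ, Fintype.sum_prod_type,
        Finset.sum_comm]
      have inner : ∀ q : Fin n,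
          (∑ p : Fin n, if p ≠ q then (X q ^ 4 : MvPolynomial (Fin n) ℝ) else 0) =
            (n - 1 : ℕ) • (X q ^ 4 : MvPolynomial (Fin n) ℝ) := by
        intro q
        rw [sum_ite_card]
        congr 1
        rw [Finset.filter_ne', Finset.card_erase_of_mem (Finset.mem_univ q)]
        simp
      simp only [inner, hS4, Finset.smul_sum]
    · -- ∑ over offDiag of X p.1 ^ 2 * X p.2 ^ 2 = 2 • G
      congr 1
      have : (Finset.univ : Finset (Fin n)).offDiag =
          (Finset.univ ×ˢ Finset.univ).filter fun p : Fin n × Fin n => p.1 ≠ p.2 := by ext; simp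
      rw [this, Finset.sum_filter, Finset.univ_product_univ, Fintype.sum_prod_type]
      have split : ∀ p q : Fin n,
          (if p ≠ q then (X p ^ 2 * X q ^ 2 : MvPolynomial (Fin n) ℝ) else 0) =
            (if p < q then (X p ^ 2 * X q ^ 2 : MvPolynomial (Fin n) ℝ) else 0) +
              (if q < p then (X p ^ 2 * X q ^ 2 : MvPolynomial (Fin n) ℝ) else 0) := by
        intro p q
        rcases lt_trichotomy p q with h | h | h
        · simp [h, h.ne, not_lt_of_gt h]
        · simp [h]
        · simp [h, h.ne', not_lt_of_gt h]
      simp only [split, Finset.sum_add_distrib]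
      rw [two_smul]
      congr 1
      rw [Finset.sum_comm]
      exact Finset.sum_congr rfl fun p _ => Finset.sum_congr rfl fun q _ => by
        rcases lt_or_ge p q with h | h
        · simp [h, mul_comm]
        · simp [not_lt_of_ge h]
  -- Laplacian of the triple sum
  have L3 : ∑ i, pderiv i (pderiv i
        ((∑ t ∈ Finset.univ.filter
            (fun t : Fin n × Fin n × Fin n => t.1 < t.2.1 ∧ t.2.1 < t.2.2),
          X t.1 ^ 2 * X t.2.1 ^ 2 * X t.2.2 ^ 2 : MvPolynomial (Fin n) ℝ))) =
      (n - 2 : ℕ) • ((2 : ℕ) • G) := by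
    simp only [map_sum]
    rw [Finset.sum_comm]
    have step : ∀ t ∈ (Finset.univ : Finset (Fin n × Fin n × Fin n)).filter
        (fun t : Fin n × Fin n × Fin n => t.1 < t.2.1 ∧ t.2.1 < t.2.2),
        ∑ i, pderiv i (pderiv i
            (X t.1 ^ 2 * X t.2.1 ^ 2 * X t.2.2 ^ 2 : MvPolynomial (Fin n) ℝ)) =
          (2 : ℕ) • (X t.2.1 ^ 2 * X t.2.2 ^ 2) + (2 : ℕ) • (X t.1 ^ 2 * X t.2.2 ^ 2) +
            (2 : ℕ) • (X t.1 ^ 2 * X t.2.1 ^ 2) := by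
      intro t ht
      rw [Finset.mem_filter] at ht
      obtain ⟨-, h1, h2⟩ := ht
      simp only [lap_triple t.1 t.2.1 t.2.2 h1.ne (h1.trans h2).ne h2.ne,
        Finset.sum_add_distrib, Fintype.sum_ite_eq']
    rw [Finset.sum_congr rfl step, Finset.sum_filter, Fintype.sum_prod_type]
    simp only [Fintype.sum_prod_type]
    -- split the ite over the three summands
    have split : ∀ (c : Prop) [Decidable c] (x y z : MvPolynomial (Fin n) ℝ),
        (if c then x + y + z else 0) =
          (if c then x else 0) + (if c then y else 0) + (if c then z else 0) := by
      intro c _ x y z; split <;> simp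
    simp only [split]
    simp only [Finset.sum_add_distrib]
    -- Term A : coefficient j
    have TA : (∑ i : Fin n, ∑ j : Fin n, ∑ k : Fin n,
        if i < j ∧ j < k then (2 : ℕ) • (X j ^ 2 * X k ^ 2 : MvPolynomial (Fin n) ℝ) else 0) =
        ∑ j : Fin n, ∑ k : Fin n,
          (j : ℕ) • (if j < k then (2 : ℕ) • (X j ^ 2 * X k ^ 2 : MvPolynomial (Fin n) ℝ)
            else 0) := by
      rw [sum3_comm]
      refine Finset.sum_congr rfl fun j _ => Finset.sum_congr rfl fun k _ => ?_
      rw [sum_ite_card]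
      by_cases h : j < k
      · rw [if_pos h]
        congr 1
        have : (Finset.univ.filter fun i : Fin n => i < j ∧ j < k) = Finset.Iio j := by
          ext i; simp [h, Finset.mem_Iio]
        rw [this, Fin.card_Iio]
      · rw [if_neg h]
        have : (Finset.univ.filter fun i : Fin n => i < j ∧ j < k) = ∅ := by
          ext i; simp [h]
        rw [this]
        simp
    -- Term B : coefficient k - i - 1
    have TB : (∑ i : Fin n, ∑ j : Fin n, ∑ k : Fin n,
        if i < j ∧ j < k then (2 : ℕ) • (X i ^ 2 * X k ^ 2 : MvPolynomial (Fin n) ℝ) else 0) =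
        ∑ i : Fin n, ∑ k : Fin n,
          ((k : ℕ) - (i : ℕ) - 1) •
            (if i < k then (2 : ℕ) • (X i ^ 2 * X k ^ 2 : MvPolynomial (Fin n) ℝ) else 0) := by
      refine Finset.sum_congr rfl fun i _ => ?_
      rw [Finset.sum_comm]
      refine Finset.sum_congr rfl fun k _ => ?_
      rw [sum_ite_card]
      have hfe : (Finset.univ.filter fun j : Fin n => i < j ∧ j < k) = Finset.Ioo i k := by
        ext j; simp [Finset.mem_Ioo]
      rw [hfe, Fin.card_Ioo]
      by_cases h : i < k
      · rw [if_pos h]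
      · rw [if_neg h, smul_zero]
        have : (k : ℕ) - (i : ℕ) - 1 = 0 := by
          have := not_lt.mp h
          omega
        rw [this, zero_smul]
    -- Term C : coefficient n - 1 - j
    have TC : (∑ i : Fin n, ∑ j : Fin n, ∑ k : Fin n,
        if i < j ∧ j < k then (2 : ℕ) • (X i ^ 2 * X j ^ 2 : MvPolynomial (Fin n) ℝ) else 0) =
        ∑ i : Fin n, ∑ j : Fin n,
          (n - 1 - (j : ℕ)) •
            (if i < j then (2 : ℕ) • (X i ^ 2 * X j ^ 2 : MvPolynomial (Fin n) ℝ) else 0) := by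
      refine Finset.sum_congr rfl fun i _ => Finset.sum_congr rfl fun j _ => ?_
      rw [sum_ite_card]
      by_cases h : i < j
      · rw [if_pos h]
        congr 1
        have : (Finset.univ.filter fun k : Fin n => i < j ∧ j < k) = Finset.Ioi j := by
          ext k; simp [h, Finset.mem_Ioi]
        rw [this, Fin.card_Ioi]
      · rw [if_neg h]
        have : (Finset.univ.filter fun k : Fin n => i < j ∧ j < k) = ∅ := by
          ext k; simp [h]
        rw [this]
        simp
    rw [TA, TB, TC]
    simp only [← Finset.sum_add_distrib]
    have combine : ∀ p q : Fin n,
        ((p : ℕ) • (if p < q then (2 : ℕ) • (X p ^ 2 * X q ^ 2 : MvPolynomial (Fin n) ℝ) else 0) +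
          ((q : ℕ) - (p : ℕ) - 1) •
            (if p < q then (2 : ℕ) • (X p ^ 2 * X q ^ 2 : MvPolynomial (Fin n) ℝ) else 0)) +
          (n - 1 - (q : ℕ)) •
            (if p < q then (2 : ℕ) • (X p ^ 2 * X q ^ 2 : MvPolynomial (Fin n) ℝ) else 0) =
        (n - 2 : ℕ) • ((2 : ℕ) •
          (if p < q then (X p ^ 2 * X q ^ 2 : MvPolynomial (Fin n) ℝ) else 0)) := by
      intro p q
      by_cases h : p < q
      · simp only [if_pos h, smul_smul]
        rw [← add_smul, ← add_smul]
        congr 1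
        have hp : (p : ℕ) < (q : ℕ) := h
        have hq : (q : ℕ) < n := q.isLt
        omega
      · simp [h]
    rw [Finset.sum_congr rfl fun p _ => Finset.sum_congr rfl fun q _ => combine p q]
    simp only [← Finset.smul_sum]
    rw [hG]
  -- assemble
  rw [f6]
  simp only [map_sub, map_add, pderiv_C_mul, Finset.sum_sub_distrib,
    Finset.sum_add_distrib, ← Finset.mul_sum]
  rw [L1, L2, L3]
  -- now pure algebra
  have nsmulC : ∀ (m : ℕ) (f : MvPolynomial (Fin n) ℝ), m • f = C (m : ℝ) * f := by
    intro m f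
    rw [nsmul_eq_mul]
    congr 1
  have hn1 : ((n - 1 : ℕ) : ℝ) = (n : ℝ) - 1 := by
    rw [Nat.cast_sub (by omega)]; norm_num
  have hn2 : ((n - 2 : ℕ) : ℝ) = (n : ℝ) - 2 := by
    rw [Nat.cast_sub (by omega)]; norm_num
  have h1 : ((n : ℝ) - 1) ≠ 0 := by
    have : (3 : ℝ) ≤ (n : ℝ) := by exact_mod_cast hn
    linarith
  have h2 : ((n : ℝ) - 2) ≠ 0 := by
    have : (3 : ℝ) ≤ (n : ℝ) := by exact_mod_cast hn
    linarith
  simp only [nsmulC, hn1, hn2]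
  have e1 : (30 : ℝ) - 15 / ((n : ℝ) - 1) * (2 * ((n : ℝ) - 1)) = 0 := by
    field_simp
    ring
  have e2 : 180 / (((n : ℝ) - 1) * ((n : ℝ) - 2)) * (((n : ℝ) - 2) * 2) -
      15 / ((n : ℝ) - 1) * (12 * 2) = 0 := by
    field_simp
    ring
  have E1 : (C (30 : ℝ) : MvPolynomial (Fin n) ℝ) -
      C (15 / ((n : ℝ) - 1)) * (C (2 : ℝ) * C ((n : ℝ) - 1)) = 0 := by
    rw [← C_mul, ← C_mul, ← C_sub]
    rw [show (30 : ℝ) - 15 / ((n : ℝ) - 1) * (2 * ((n : ℝ) - 1)) = 0 from e1, map_zero]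
  have E2 : (C (180 / (((n : ℝ) - 1) * ((n : ℝ) - 2))) : MvPolynomial (Fin n) ℝ) *
        (C ((n : ℝ) - 2) * C (2 : ℝ)) -
      C (15 / ((n : ℝ) - 1)) * (C (12 : ℝ) * C (2 : ℝ)) = 0 := by
    rw [← C_mul, ← C_mul, ← C_mul, ← C_mul, ← C_sub]
    rw [show 180 / (((n : ℝ) - 1) * ((n : ℝ) - 2)) * (((n : ℝ) - 2) * 2) -
      15 / ((n : ℝ) - 1) * (12 * 2) = 0 from e2, map_zero]
  linear_combination S4 * E1 + G * E2
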